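/- For every real q with 0 < q < 1 and every x in [0,1], the function T(x) = (1+x)^q - (1-x)^q - 2^q·x is nonpositive. -/

import Mathlib

open Real Set

/-- For `0 < q < 1` and `x ∈ [0,1]`, `T(x) = (1+x)^q - (1-x)^q - 2^q·x ≤ 0`. -/
theorem T_nonpos (q x : ℝ) (hq0 : 0 < q) (hq1 : q < 1) (hx0 : 0 ≤ x) (hx1 : x ≤ 1) :
    (1 + x) ^ q - (1 - x) ^ q - (2 : ℝ) ^ q * x ≤ 0 := by
  set g : ℝ → ℝ := fun y => (1 + y) ^ q - (1 - y) ^ q with hgdef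
  have hconv : ConvexOn ℝ (Icc (0:ℝ) 1) g := by
    have hint : interior (Icc (0:ℝ) 1) = Ioo (0:ℝ) 1 := interior_Icc
    apply convexOn_of_hasDerivWithinAt2_nonneg (convex_Icc 0 1)
      (f' := fun y => q * (1 + y) ^ (q - 1) + q * (1 - y) ^ (q - 1))
      (f'' := fun y => q * (q - 1) * (1 + y) ^ (q - 2) - q * (q - 1) * (1 - y) ^ (q - 2))
    · apply Continuous.continuousOn
      have h1 : Continuous fun y : ℝ => (1 + y) ^ q :=
        (continuous_const.add continuous_id).rpow_const fun y => Or.inr hq0.le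
      have h2 : Continuous fun y : ℝ => (1 - y) ^ q :=
        (continuous_const.sub continuous_id).rpow_const fun y => Or.inr hq0.le
      exact h1.sub h2
    · rw [hint]
      intro y hy
      have hy1 : (0:ℝ) < 1 + y := by linarith [hy.1]
      have hy2 : (0:ℝ) < 1 - y := by linarith [hy.2]
      have d1 : HasDerivAt (fun y : ℝ => (1 + y) ^ q) (1 * q * (1 + y) ^ (q - 1)) y :=
        (HasDerivAt.const_add 1 (hasDerivAt_id y)).rpow_const (Or.inl hy1.ne')
      have d2 : HasDerivAt (fun y : ℝ => (1 - y) ^ q) ((-1) * q * (1 - y) ^ (q - 1)) y :=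
        (HasDerivAt.const_sub 1 (hasDerivAt_id y)).rpow_const (Or.inl hy2.ne')
      have := (d1.sub d2).hasDerivWithinAt (s := Ioo (0:ℝ) 1)
      refine this.congr_deriv ?_
      ring
    · rw [hint]
      intro y hy
      have hy1 : (0:ℝ) < 1 + y := by linarith [hy.1]
      have hy2 : (0:ℝ) < 1 - y := by linarith [hy.2]
      have d1 : HasDerivAt (fun y : ℝ => (1 + y) ^ (q - 1)) (1 * (q - 1) * (1 + y) ^ (q - 1 - 1)) y :=
        (HasDerivAt.const_add 1 (hasDerivAt_id y)).rpow_const (Or.inl hy1.ne')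
      have d2 : HasDerivAt (fun y : ℝ => (1 - y) ^ (q - 1)) ((-1) * (q - 1) * (1 - y) ^ (q - 1 - 1)) y :=
        (HasDerivAt.const_sub 1 (hasDerivAt_id y)).rpow_const (Or.inl hy2.ne')
      have := ((d1.const_mul q).add (d2.const_mul q)).hasDerivWithinAt (s := Ioo (0:ℝ) 1)
      refine this.congr_deriv ?_
      have : q - 1 - 1 = q - 2 := by ring
      rw [this]
      ring
    · rw [hint]
      intro y hy
      have hy1 : (0:ℝ) < 1 + y := by linarith [hy.1]
      have hy2 : (0:ℝ) < 1 - y := by linarith [hy.2]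
      have hle : (1 + y) ^ (q - 2) ≤ (1 - y) ^ (q - 2) :=
        Real.rpow_le_rpow_of_nonpos hy2 (by linarith [hy.1]) (by linarith)
      have hqq : q * (q - 1) ≤ 0 := mul_nonpos_of_nonneg_of_nonpos hq0.le (by linarith)
      nlinarith
  have h0 : g 0 = 0 := by simp [hgdef]
  have h1 : g 1 = (2:ℝ) ^ q := by
    simp only [hgdef]
    norm_num [Real.zero_rpow hq0.ne']
  have key := hconv.2 (left_mem_Icc.mpr zero_le_one) (right_mem_Icc.mpr zero_le_one)
    (show (0:ℝ) ≤ 1 - x by linarith) (show (0:ℝ) ≤ x from hx0) (show (1 - x) + x = 1 by ring)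
  simp only [smul_eq_mul, h0, h1] at key
  have : g ((1 - x) * 0 + x * 1) = g x := by norm_num
  rw [this] at key
  simp only [hgdef] at key
  nlinarith
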